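/- Let h_1,…,h_K ∈ ℂ^N, set H_l = h_l h_l^H, and let Ω(H) = {(tr(Q H_1), …, tr(Q H_K)) : Q Hermitian positive semidefinite, tr(Q) ≤ 1} and W(H) = {(tr(Q H_1), …, tr(Q H_K)) : Q Hermitian positive semidefinite, tr(Q) = 1}. If η ∈ ℝ^K is such that the support value s_{Ω(H)}(η) = max_{y∈Ω(H)} ηᵀy is strictly positive, then the exposed faces coincide: Φ_{Ω(H)}(η) = Φ_{W(H)}(η), i.e., {y ∈ Ω(H) : ηᵀy = s_{Ω(H)}(η)} = {y ∈ W(H) : ηᵀy = max_{z∈W(H)} ηᵀz}. -/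

import Mathlib

open Matrix
open scoped ComplexOrder

/-- The joint field of values
`W(H) = {(tr(Q H_1),…,tr(Q H_K)) : Q PSD, tr Q = 1}`. -/
def JFV {N K : ℕ} (H : Fin K → Matrix (Fin N) (Fin N) ℂ) : Set (Fin K → ℝ) :=
  {y | ∃ Q : Matrix (Fin N) (Fin N) ℂ, Q.PosSemidef ∧ Q.trace = 1 ∧
    y = fun l => ((Q * H l).trace).re}

/-- `Ω(H) = {(tr(Q H_1),…,tr(Q H_K)) : Q PSD, tr Q ≤ 1}`. -/
def OmegaH {N K : ℕ} (H : Fin K → Matrix (Fin N) (Fin N) ℂ) : Set (Fin K → ℝ) :=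
  {y | ∃ Q : Matrix (Fin N) (Fin N) ℂ, Q.PosSemidef ∧ Q.trace.re ≤ 1 ∧
    y = fun l => ((Q * H l).trace).re}

namespace OmegaFaceAux

lemma trace_mul_vmv {N : ℕ} (Q : Matrix (Fin N) (Fin N) ℂ) (v : Fin N → ℂ) :
    (Q * vecMulVec v (star v)).trace = star v ⬝ᵥ Q *ᵥ v := by
  simp only [Matrix.trace, Matrix.diag, Matrix.mul_apply, vecMulVec_apply, dotProduct, mulVec,
    Pi.star_apply, Finset.mul_sum]
  refine Finset.sum_congr rfl fun i _ => Finset.sum_congr rfl fun j _ => by ring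

lemma sum_normSq_bound {N : ℕ} (B : Matrix (Fin N) (Fin N) ℂ) (v : Fin N → ℂ) :
    ∑ i, Complex.normSq ((B *ᵥ v) i)
      ≤ (∑ i, ∑ j, Complex.normSq (B j i)) * ∑ j, Complex.normSq (v j) := by
  rw [show (∑ i, ∑ j, Complex.normSq (B j i)) = ∑ i, ∑ j, Complex.normSq (B i j) from
    Finset.sum_comm, Finset.sum_mul]
  refine Finset.sum_le_sum fun i _ => ?_
  calc Complex.normSq ((B *ᵥ v) i) = ‖∑ j, B i j * v j‖ ^ 2 := by
        rw [Complex.sq_norm]; rfl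
    _ ≤ (∑ j, ‖B i j‖ * ‖v j‖) ^ 2 := by
        have h1 : ‖∑ j, B i j * v j‖ ≤ ∑ j, ‖B i j‖ * ‖v j‖ :=
          (norm_sum_le _ _).trans (le_of_eq (by simp [norm_mul]))
        exact pow_le_pow_left₀ (norm_nonneg _) h1 2
    _ ≤ (∑ j, ‖B i j‖ ^ 2) * ∑ j, ‖v j‖ ^ 2 := Finset.sum_mul_sq_le_sq_mul_sq _ _ _
    _ = (∑ j, Complex.normSq (B i j)) * ∑ j, Complex.normSq (v j) := by
        simp only [Complex.sq_norm]

lemma quad_le_trace {N : ℕ} (Q : Matrix (Fin N) (Fin N) ℂ) (hQ : Q.PosSemidef) (v : Fin N → ℂ) :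
    (star v ⬝ᵥ Q *ᵥ v).re ≤ Q.trace.re * ∑ j, Complex.normSq (v j) := by
  obtain ⟨B, rfl⟩ : ∃ B : Matrix (Fin N) (Fin N) ℂ, Q = Bᴴ * B := by
    open scoped MatrixOrder Matrix.Norms.L2Operator in
    exact CStarAlgebra.nonneg_iff_eq_star_mul_self.mp hQ.nonneg
  have h1 : (star v ⬝ᵥ (Bᴴ * B) *ᵥ v) = ∑ i, (Complex.normSq ((B *ᵥ v) i) : ℂ) := by
    rw [← mulVec_mulVec, dotProduct_mulVec, vecMul_conjTranspose, star_star]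
    simp [dotProduct, Complex.normSq_eq_conj_mul_self, mul_comm]
  have h2 : (Bᴴ * B).trace = ∑ i, ∑ j, (Complex.normSq (B j i) : ℂ) := by
    simp [Matrix.trace, Matrix.diag, Matrix.mul_apply, conjTranspose_apply,
      Complex.normSq_eq_conj_mul_self]
  rw [h1, h2]
  have := sum_normSq_bound B v
  simpa using this

lemma diag_nonneg {N : ℕ} {Q : Matrix (Fin N) (Fin N) ℂ} (hQ : Q.PosSemidef) (i : Fin N) :
    0 ≤ Q i i := by
  have := hQ.dotProduct_mulVec_nonneg (Pi.single i 1)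
  simpa [dotProduct, mulVec, Pi.single_apply, Finset.sum_ite_eq] using this

lemma trace_re_nonneg {N : ℕ} {Q : Matrix (Fin N) (Fin N) ℂ} (hQ : Q.PosSemidef) :
    0 ≤ Q.trace.re := by
  have : Q.trace = ∑ i, Q i i := rfl
  rw [this, Complex.re_sum]
  exact Finset.sum_nonneg fun i _ => ((Complex.nonneg_iff).mp (diag_nonneg hQ i)).1

lemma trace_eq_re {N : ℕ} {Q : Matrix (Fin N) (Fin N) ℂ} (hQ : Q.PosSemidef) :
    Q.trace = (Q.trace.re : ℂ) := by
  have him : Q.trace.im = 0 := by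
    have h : Q.trace = ∑ i, Q i i := rfl
    rw [h, Complex.im_sum]
    exact Finset.sum_eq_zero fun i _ => ((Complex.nonneg_iff).mp (diag_nonneg hQ i)).2.symm
  exact Complex.ext rfl (by simp [him])

lemma smul_posSemidef {N : ℕ} {t : ℝ} (ht : 0 ≤ t) {Q : Matrix (Fin N) (Fin N) ℂ}
    (hQ : Q.PosSemidef) : ((t : ℂ) • Q).PosSemidef := by
  refine Matrix.PosSemidef.of_dotProduct_mulVec_nonneg ?_ ?_
  · unfold Matrix.IsHermitian
    rw [conjTranspose_smul, hQ.1.eq]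
    congr 1
    simp [Complex.ext_iff]
  · intro x
    rw [smul_mulVec, dotProduct_smul]
    exact mul_nonneg (by exact_mod_cast Complex.zero_le_real.mpr ht) (hQ.dotProduct_mulVec_nonneg x)

/-- Coordinate bounds for points of `Ω`. -/
lemma omega_coord_bounds {N K : ℕ} (h : Fin K → Fin N → ℂ) {y : Fin K → ℝ}
    (hy : y ∈ OmegaH (fun l => Matrix.vecMulVec (h l) (star (h l)))) (l : Fin K) :
    0 ≤ y l ∧ y l ≤ ∑ j, Complex.normSq (h l j) := by
  obtain ⟨Q, hQ, htr, rfl⟩ := hy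
  have hco : ((Q * Matrix.vecMulVec (h l) (star (h l))).trace).re
      = (star (h l) ⬝ᵥ Q *ᵥ (h l)).re := by rw [trace_mul_vmv]
  dsimp only
  constructor
  · rw [hco]
    exact ((Complex.nonneg_iff).mp (hQ.dotProduct_mulVec_nonneg (h l))).1
  · rw [hco]
    refine (quad_le_trace Q hQ (h l)).trans ?_
    have hn : 0 ≤ ∑ j, Complex.normSq (h l j) :=
      Finset.sum_nonneg fun j _ => Complex.normSq_nonneg _
    nlinarith

/-- Decomposition of points of `Ω` as scalings of points of `W`. -/
lemma omega_decomp {N K : ℕ} (h : Fin K → Fin N → ℂ) {y : Fin K → ℝ}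
    (hy : y ∈ OmegaH (fun l => Matrix.vecMulVec (h l) (star (h l)))) :
    y = 0 ∨ ∃ t : ℝ, 0 < t ∧ t ≤ 1 ∧
      ∃ w ∈ JFV (fun l => Matrix.vecMulVec (h l) (star (h l))), y = t • w := by
  obtain ⟨Q, hQ, htr, rfl⟩ := hy
  rcases eq_or_lt_of_le (trace_re_nonneg hQ) with h0 | hpos
  · left
    funext l
    have hub : ((Q * Matrix.vecMulVec (h l) (star (h l))).trace).re
        ≤ Q.trace.re * ∑ j, Complex.normSq (h l j) := by
      rw [trace_mul_vmv]; exact quad_le_trace Q hQ (h l)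
    have hlb : 0 ≤ ((Q * Matrix.vecMulVec (h l) (star (h l))).trace).re := by
      rw [trace_mul_vmv]; exact ((Complex.nonneg_iff).mp (hQ.dotProduct_mulVec_nonneg (h l))).1
    rw [← h0] at hub
    simp only [zero_mul] at hub
    simp only [Pi.zero_apply]
    linarith
  · right
    set t := Q.trace.re with htdef
    refine ⟨t, hpos, htr,
      (fun l => (((((1/t : ℝ) : ℂ) • Q) * Matrix.vecMulVec (h l) (star (h l))).trace).re),
      ⟨((1/t : ℝ) : ℂ) • Q, smul_posSemidef (by positivity) hQ, ?_, rfl⟩, ?_⟩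
    · rw [trace_smul, smul_eq_mul, trace_eq_re hQ, ← htdef]
      push_cast
      field_simp
    · funext l
      dsimp only [Pi.smul_apply, smul_eq_mul]
      rw [Matrix.smul_mul, trace_smul, smul_eq_mul]
      have : (((1/t : ℝ) : ℂ) * (Q * Matrix.vecMulVec (h l) (star (h l))).trace).re
          = (1/t) * ((Q * Matrix.vecMulVec (h l) (star (h l))).trace).re := by
        simp [Complex.mul_re]
      simp only [Pi.smul_apply, smul_eq_mul, this]
      field_simp

lemma zero_mem_omega {N K : ℕ} (h : Fin K → Fin N → ℂ) :
    (0 : Fin K → ℝ) ∈ OmegaH (fun l => Matrix.vecMulVec (h l) (star (h l))) :=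
  ⟨0, Matrix.PosSemidef.zero, by simp, by funext l; simp⟩

lemma jfv_subset_omega {N K : ℕ} (h : Fin K → Fin N → ℂ) :
    JFV (fun l => Matrix.vecMulVec (h l) (star (h l)))
      ⊆ OmegaH (fun l => Matrix.vecMulVec (h l) (star (h l))) := by
  rintro y ⟨Q, hQ, htr, rfl⟩
  exact ⟨Q, hQ, by rw [htr]; norm_num, rfl⟩

lemma jfv_nonempty {N K : ℕ} (hN : 0 < N) (h : Fin K → Fin N → ℂ) :
    (JFV (fun l => Matrix.vecMulVec (h l) (star (h l)))).Nonempty := by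
  classical
  set i0 : Fin N := ⟨0, hN⟩
  set Q : Matrix (Fin N) (Fin N) ℂ := Matrix.diagonal (Pi.single i0 1) with hQdef
  have hQ : Q.PosSemidef := by
    refine Matrix.PosSemidef.diagonal ?_
    intro i
    by_cases hi : i = i0 <;> simp [Pi.single_apply, hi]
  have htr : Q.trace = 1 := by
    rw [hQdef, Matrix.trace_diagonal]
    simp
  exact ⟨_, Q, hQ, htr, rfl⟩

lemma scale_f {K : ℕ} (η : Fin K → ℝ) (t : ℝ) (w : Fin K → ℝ) :
    ∑ l, η l * (t • w) l = t * ∑ l, η l * w l := by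
  rw [Finset.mul_sum]
  exact Finset.sum_congr rfl fun l _ => by simp [Pi.smul_apply]; ring

end OmegaFaceAux

open OmegaFaceAux in
/-- For `H_l = h_l h_lᴴ` and a direction `η` whose support value on `Ω(H)` is
strictly positive, the exposed faces of `Ω(H)` and of `W(H)` in direction `η`
coincide. -/
theorem omega_exposed_face_eq_jfv_exposed_face
    (N K : ℕ)
    (h : Fin K → (Fin N → ℂ))
    (η : Fin K → ℝ)
    (hpos : 0 < sSup ((fun y : Fin K → ℝ => ∑ l, η l * y l) ''
        OmegaH (fun l => Matrix.vecMulVec (h l) (star (h l))))) :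
    {y ∈ OmegaH (fun l => Matrix.vecMulVec (h l) (star (h l))) |
        ∑ l, η l * y l = sSup ((fun y : Fin K → ℝ => ∑ l, η l * y l) ''
          OmegaH (fun l => Matrix.vecMulVec (h l) (star (h l))))} =
      {y ∈ JFV (fun l => Matrix.vecMulVec (h l) (star (h l))) |
        ∑ l, η l * y l = sSup ((fun y : Fin K → ℝ => ∑ l, η l * y l) ''
          JFV (fun l => Matrix.vecMulVec (h l) (star (h l))))} := by
  set H := fun l => Matrix.vecMulVec (h l) (star (h l)) with hHdef
  set f : (Fin K → ℝ) → ℝ := fun y => ∑ l, η l * y l with hfdef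
  -- the case `N = 0` contradicts `hpos`
  rcases Nat.eq_zero_or_pos N with hN | hN
  · exfalso
    have hzero : ∀ y ∈ OmegaH H, y = 0 := by
      rintro y ⟨Q, hQ, _, rfl⟩
      funext l
      haveI : IsEmpty (Fin N) := by rw [hN]; exact Fin.isEmpty
      simp [Matrix.trace_eq_zero_of_isEmpty]
    have himg : (f '' OmegaH H) = {0} := by
      ext x
      constructor
      · rintro ⟨y, hy, rfl⟩
        rw [hzero y hy]
        simp [hfdef]
      · rintro rfl
        exact ⟨0, zero_mem_omega h, by simp [hfdef]⟩
    rw [himg, csSup_singleton] at hpos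
    exact lt_irrefl _ hpos
  -- main case
  have h0 : (0 : Fin K → ℝ) ∈ OmegaH H := zero_mem_omega h
  have hWsub : JFV H ⊆ OmegaH H := jfv_subset_omega h
  have hWne : (JFV H).Nonempty := jfv_nonempty hN h
  have hBdd : BddAbove (f '' OmegaH H) := by
    refine ⟨∑ l, |η l| * ∑ j, Complex.normSq (h l j), ?_⟩
    rintro x ⟨y, hy, rfl⟩
    refine Finset.sum_le_sum fun l _ => ?_
    obtain ⟨h1, h2⟩ := omega_coord_bounds h hy l
    have := le_abs_self (η l)
    nlinarith [abs_nonneg (η l)]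
  have hBddW : BddAbove (f '' JFV H) := hBdd.mono (Set.image_mono hWsub)
  have hWle : sSup (f '' JFV H) ≤ sSup (f '' OmegaH H) :=
    csSup_le_csSup hBdd (hWne.image f) (Set.image_mono hWsub)
  have hOle : sSup (f '' OmegaH H) ≤ max (sSup (f '' JFV H)) 0 := by
    refine csSup_le ((Set.nonempty_of_mem h0).image f) ?_
    rintro x ⟨y, hy, rfl⟩
    rcases omega_decomp h hy with rfl | ⟨t, ht0, ht1, w, hw, rfl⟩
    · simp [hfdef]
    · have hfw : f (t • w) = t * f w := scale_f η t w
      rw [hfw]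
      rcases le_or_gt (f w) 0 with hle | hlt
      · exact le_max_of_le_right (mul_nonpos_of_nonneg_of_nonpos ht0.le hle)
      · refine le_max_of_le_left ?_
        have hfwle : f w ≤ sSup (f '' JFV H) := le_csSup hBddW ⟨w, hw, rfl⟩
        nlinarith
  have hss : sSup (f '' OmegaH H) = sSup (f '' JFV H) := by
    rcases le_max_iff.mp hOle with h1 | h1
    · exact le_antisymm h1 hWle
    · linarith
  ext y
  simp only [Set.mem_setOf_eq, Set.mem_sep_iff]
  constructor
  · rintro ⟨hyΩ, hfy⟩
    rcases omega_decomp h hyΩ with rfl | ⟨t, ht0, ht1, w, hw, rfl⟩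
    · exfalso
      have h0' : f (0 : Fin K → ℝ) = 0 := by simp [hfdef]
      have hz : (0 : ℝ) = sSup (f '' OmegaH H) := by rw [← h0']; exact hfy
      linarith
    · have hfw : f (t • w) = t * f w := scale_f η t w
      have hfy' : t * f w = sSup (f '' OmegaH H) := by rw [← hfw]; exact hfy
      have hfwle : f w ≤ sSup (f '' JFV H) := le_csSup hBddW ⟨w, hw, rfl⟩
      have hwpos : 0 < f w := by
        by_contra h'
        push_neg at h'
        have : t * f w ≤ 0 := mul_nonpos_of_nonneg_of_nonpos ht0.le h'
        linarith
      have hfw2 : f w ≤ t * f w := by rw [hfy', hss] at *; linarith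
      have ht : t = 1 := le_antisymm ht1 (by nlinarith)
      subst ht
      refine ⟨by simpa using hw, ?_⟩
      show f ((1:ℝ) • w) = sSup (f '' JFV H)
      rw [hfw, one_mul, ← hss, ← hfy', one_mul]
  · rintro ⟨hyW, hfy⟩
    exact ⟨hWsub hyW, by rw [hfy, hss]⟩
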